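/- Let k ≥ 7 be odd, let G be a graph on n vertices containing no odd cycle of length less than k, and fix a k-cycle v_0v_1…v_{k−1} in G with vertex set C, good sequences D_j (0 ≤ j ≤ k−1), and n_{i,j} = |A_i(D_j)|. Then ∑_{j=0}^{k−1} ( n_{1,j}/2 + ∑_{i=2}^{k−1} n_{i,j} ) = n(k−1) holds if and only if every vertex of G is adjacent to exactly two vertices of C which are at distance two along the cycle C. -/

import Mathlib

/-- `f` realizes a cycle of length `ℓ` in `G`: an injective map from `ZMod ℓ` whose
consecutive images are adjacent. -/
def IsCycleMap {V : Type*} (G : SimpleGraph V) {ℓ : ℕ} (f : ZMod ℓ → V) : Prop :=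
  Function.Injective f ∧ ∀ i, G.Adj (f i) (f (i + 1))

/-- `G` contains no odd cycle of length less than `k`. -/
def NoShortOddCycle {V : Type*} (G : SimpleGraph V) (k : ℕ) : Prop :=
  ∀ ℓ : ℕ, Odd ℓ → 3 ≤ ℓ → ℓ < k → ∀ f : ZMod ℓ → V, ¬ IsCycleMap G f

/-- The good sequence associated to the cycle `f = (v_0, v_1, …, v_{k-1})`:
the entries `v_2` and `v_3` are swapped. -/
def goodOfCycle {V : Type*} {k : ℕ} (f : ZMod k → V) : ZMod k → V :=
  fun i => if i = 2 then f 3 else if i = 3 then f 2 else f i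

/-- `z` is a good sequence in `G`: it arises from some `k`-cycle of `G`
(quantifying over all cycle maps accounts for all `2k` rotations and reflections). -/
def IsGoodSeq {V : Type*} (G : SimpleGraph V) {k : ℕ} (z : ZMod k → V) : Prop :=
  ∃ f : ZMod k → V, IsCycleMap G f ∧ z = goodOfCycle f

/-- The vertex sequence `z₀, z₁, z₃, z₂, z₄, …, z_{i-1}, w` (indices `0, …, i`,
with the final entry `w` at index `i`). -/
def seqAt {V : Type*} {k : ℕ} (z : ZMod k → V) (w : V) (i : ℕ) : ℕ → V :=
  fun a => if a = i then w else if a = 2 then z 3 else if a = 3 then z 2 else z (a : ZMod k)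

/-- `q 0, q 1, …, q i` is an induced path in `G`. -/
def IsInducedPathOn {V : Type*} (G : SimpleGraph V) (q : ℕ → V) (i : ℕ) : Prop :=
  (∀ a b, a ≤ i → b ≤ i → q a = q b → a = b) ∧
  (∀ a b, a ≤ i → b ≤ i → (G.Adj (q a) (q b) ↔ (b = a + 1 ∨ a = b + 1)))

/-- `q 0, q 1, …, q (k-1)` is an induced cycle in `G`. -/
def IsInducedCycleOn {V : Type*} (G : SimpleGraph V) (q : ℕ → V) (k : ℕ) : Prop :=
  (∀ a b, a < k → b < k → q a = q b → a = b) ∧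
  (∀ a b, a < k → b < k →
    (G.Adj (q a) (q b) ↔
      ((b = a + 1 ∨ a = b + 1) ∨ (a = 0 ∧ b = k - 1) ∨ (b = 0 ∧ a = k - 1))))

/-- The set `A_i(D)` for the good sequence `D = z` (of a graph `G` without odd cycles of
length less than `k`). -/
def Aset {V : Type*} (G : SimpleGraph V) (k : ℕ) (z : ZMod k → V) (i : ℕ) : Set V :=
  if i = 0 then Set.univ
  else if i = 1 then G.neighborSet (z 0)
  else if i = 2 then {w | w ∉ G.neighborSet (z 0) ∧ G.dist (z 1) w = 2}
  else if i = 3 then G.neighborSet (z 1) ∩ G.neighborSet (z 2)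
  else if i = k - 1 then {w | IsInducedCycleOn G (seqAt z w (k - 1)) k}
  else {w | IsInducedPathOn G (seqAt z w i) i}

/-- The weight `w(D) = ∏_{i=0}^{k-1} |A_i(D)|⁻¹` of a good sequence `D = z`. -/
noncomputable def weight {V : Type*} (G : SimpleGraph V) (k : ℕ) (z : ZMod k → V) : ℝ :=
  ∏ i ∈ Finset.range k, ((Nat.card ↥(Aset G k z i) : ℝ))⁻¹

/-- The good sequence `D_j = (v_j, v_{j+1}, v_{j+3}, v_{j+2}, v_{j+4}, …, v_{j+k-1})`
associated to the cycle `f = (v_0, …, v_{k-1})` (indices mod `k`). -/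
def goodRot {V : Type*} {k : ℕ} (f : ZMod k → V) (j : ZMod k) : ZMod k → V :=
  goodOfCycle (fun i => f (j + i))


lemma no_odd_closed_walk {V : Type*} {G : SimpleGraph V} {k : ℕ} (hG : NoShortOddCycle G k) :
    ∀ m, Odd m → m < k → ∀ p : ℕ → V, (∀ i < m, G.Adj (p i) (p (i+1))) → p m = p 0 → False := by
  intro m
  induction m using Nat.strong_induction_on with
  | _ m IH =>
  intro hm hmk p hadj hclose
  have hm1 : m ≠ 1 := by
    rintro rfl
    exact G.irrefl (hclose ▸ hadj 0 (by omega))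
  have hm3 : 3 ≤ m := by
    rcases hm with ⟨t, rfl⟩; omega
  by_cases hrep : ∃ s t, s < t ∧ t ≤ m ∧ t - s < m ∧ p s = p t
  · obtain ⟨s, t, hst, htm, hlt, heq⟩ := hrep
    rcases Nat.even_or_odd (t - s) with hev | hod
    · -- m - (t - s) is odd
      have hodd2 : Odd (m - (t - s)) := by
        rcases hm with ⟨u, hu⟩; rcases hev with ⟨v, hv⟩; exact ⟨u - v, by omega⟩
      refine IH (m - (t - s)) (by omega) hodd2 (by omega)
        (fun a => if a ≤ m - t then p (t + a) else p (a - (m - t))) ?_ ?_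
      · intro i hi
        rcases lt_trichotomy (i+1) (m - t + 1) with h1 | h1 | h1
        · have e1 : (if i ≤ m - t then p (t + i) else p (i - (m - t))) = p (t+i) := by
            rw [if_pos (by omega)]
          have e2 : (if i + 1 ≤ m - t then p (t + (i+1)) else p (i + 1 - (m - t))) = p (t+i+1) := by
            rw [if_pos (by omega)]; ring_nf
          simp only [e1, e2]
          exact hadj (t+i) (by omega)
        · -- i = m - t
          have e1 : (if i ≤ m - t then p (t + i) else p (i - (m - t))) = p 0 := by
            rw [if_pos (by omega)]
            have : t + i = m := by omega
            rw [this, hclose]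
          have e2 : (if i + 1 ≤ m - t then p (t + (i+1)) else p (i + 1 - (m - t))) = p 1 := by
            rw [if_neg (by omega)]
            congr 1; omega
          simp only [e1, e2]
          exact hadj 0 (by omega)
        · have e1 : (if i ≤ m - t then p (t + i) else p (i - (m - t))) = p (i - (m-t)) := by
            rw [if_neg (by omega)]
          have e2 : (if i + 1 ≤ m - t then p (t + (i+1)) else p (i + 1 - (m - t))) = p ((i - (m-t)) + 1) := by
            rw [if_neg (by omega)]; congr 1; omega
          simp only [e1, e2]
          exact hadj (i - (m - t)) (by omega)
      · show (if m - (t - s) ≤ m - t then p (t + (m - (t - s))) else p (m - (t - s) - (m - t)))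
            = (if 0 ≤ m - t then p (t + 0) else p (0 - (m - t)))
        rw [if_pos (Nat.zero_le _)]
        have ht0 : t + 0 = t := by omega
        rw [ht0]
        rcases Nat.eq_zero_or_pos s with hs | hs
        · rw [if_pos (by omega)]
          have h2 : t + (m - (t - s)) = m := by omega
          rw [h2, hclose]
          rw [hs] at heq
          exact heq
        · rw [if_neg (by omega)]
          have h2 : m - (t - s) - (m - t) = s := by omega
          rw [h2, heq]
    · -- t - s odd
      refine IH (t - s) (by omega) hod (by omega) (fun a => p (s + a)) ?_ ?_
      · intro i hi
        exact hadj (s + i) (by omega)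
      · show p (s + (t - s)) = p (s + 0)
        have h1 : s + (t - s) = t := by omega
        have h2 : s + 0 = s := by omega
        rw [h1, h2]; exact heq.symm
  · push_neg at hrep
    haveI : NeZero m := ⟨by omega⟩
    refine hG m hm hm3 hmk (fun i : ZMod m => p i.val) ⟨?_, ?_⟩
    · intro x y hxy
      simp only at hxy
      rcases lt_trichotomy x.val y.val with h | h | h
      · exact absurd hxy (hrep x.val y.val h (le_of_lt (ZMod.val_lt y)) (by have := ZMod.val_lt y; omega))
      · exact ZMod.val_injective m h
      · exact absurd hxy.symm (hrep y.val x.val h (le_of_lt (ZMod.val_lt x)) (by have := ZMod.val_lt x; omega))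
    · intro i
      haveI : Fact (1 < m) := ⟨by omega⟩
      have hv : (i + 1).val = (i.val + 1) % m := by
        rw [ZMod.val_add, ZMod.val_one]
      simp only
      rcases lt_or_ge (i.val + 1) m with h | h
      · rw [hv, Nat.mod_eq_of_lt h]
        exact hadj i.val (by omega)
      · have hiv : i.val = m - 1 := by have := ZMod.val_lt i; omega
        have : (i+1).val = 0 := by
          have h0 : m - 1 + 1 = m := by omega
          rw [hv, hiv, h0, Nat.mod_self]
        rw [this, ← hclose, hiv]
        have := hadj (m-1) (by omega)
        have hm' : m - 1 + 1 = m := by omega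
        rwa [hm'] at this

section Parity
variable {V : Type*} {k : ℕ} {G : SimpleGraph V} {f : ZMod k → V}

lemma zmod_add_natCast_val [NeZero k] (x y : ZMod k) : x + ((y - x).val : ZMod k) = y := by
  rw [ZMod.natCast_rightInverse (y - x)]; ring

lemma chain_bound (hG : NoShortOddCycle G k) (hk7 : 7 ≤ k) (hf : IsCycleMap G f)
    (x y : ZMod k) (r : ℕ) (c : ℕ → V) (hc0 : c 0 = f y) (hcr : c r = f x)
    (hcadj : ∀ i < r, G.Adj (c i) (c (i+1))) (hodd : Odd ((y - x).val + r)) :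
    k ≤ (y - x).val + r := by
  haveI : NeZero k := ⟨by omega⟩
  by_contra hcon
  push_neg at hcon
  set d := (y - x).val with hd
  refine no_odd_closed_walk hG (d + r) hodd hcon
    (fun a => if a < d then f (x + a) else c (a - d)) ?_ ?_
  · intro i hi
    rcases lt_trichotomy (i+1) d with h1 | h1 | h1
    · show G.Adj (if i < d then f (x + i) else c (i - d))
        (if i + 1 < d then f (x + (i+1 : ℕ)) else c (i + 1 - d))
      rw [if_pos (by omega), if_pos h1]
      have hc : ((i + 1 : ℕ) : ZMod k) = (i : ZMod k) + 1 := by push_cast; ring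
      rw [hc, ← add_assoc]
      exact hf.2 (x + i)
    · -- i + 1 = d
      show G.Adj (if i < d then f (x + i) else c (i - d))
        (if i + 1 < d then f (x + (i+1 : ℕ)) else c (i + 1 - d))
      rw [if_pos (by omega), if_neg (by omega)]
      have h2 : i + 1 - d = 0 := by omega
      rw [h2, hc0]
      have hy : y = x + (i : ZMod k) + 1 := by
        have := zmod_add_natCast_val x y
        rw [← hd] at this
        rw [← this, ← h1]
        push_cast; ring
      rw [hy]
      exact hf.2 (x + i)
    · show G.Adj (if i < d then f (x + i) else c (i - d))
        (if i + 1 < d then f (x + (i+1 : ℕ)) else c (i + 1 - d))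
      rw [if_neg (by omega), if_neg (by omega)]
      have h2 : i + 1 - d = (i - d) + 1 := by omega
      rw [h2]
      exact hcadj (i - d) (by omega)
  · show (if d + r < d then f (x + (d + r : ℕ)) else c (d + r - d))
      = (if 0 < d then f (x + (0 : ℕ)) else c (0 - d))
    rw [if_neg (by omega)]
    have h2 : d + r - d = r := by omega
    rw [h2, hcr]
    rcases Nat.eq_zero_or_pos d with h0 | h0
    · rw [if_neg (by omega)]
      have hy : y = x := by
        have := zmod_add_natCast_val x y
        rw [← hd, h0] at this
        simpa using this.symm
      have h3 : (0 : ℕ) - d = 0 := by omega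
      rw [h3, hc0, hy]
    · rw [if_pos h0]
      simp

lemma val_add_val_neg [NeZero k] (x y : ZMod k) (hxy : x ≠ y) :
    (y - x).val + (x - y).val = k := by
  have h1 : (y - x) ≠ 0 := fun h => hxy (by linear_combination -h)
  have h2 : (x - y) = -(y - x) := by ring
  have h3 : k ∣ ((y - x).val + (x - y).val : ℕ) := by
    rw [← ZMod.natCast_eq_zero_iff]
    push_cast [ZMod.natCast_rightInverse (y-x), ZMod.natCast_rightInverse (x-y)]
    ring
  have h4 : (y - x).val < k := ZMod.val_lt _
  have h5 : (x - y).val < k := ZMod.val_lt _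
  have h6 : 0 < (y - x).val := by
    rcases Nat.eq_zero_or_pos (y - x).val with h | h
    · exfalso
      apply h1
      rw [← ZMod.natCast_rightInverse (y - x), h]
      simp
    · exact h
  rcases h3 with ⟨e, he⟩
  have hk0 : 0 < k := Nat.pos_of_ne_zero (NeZero.ne k)
  have he1 : e = 1 := by nlinarith
  rw [he1, mul_one] at he
  omega

end Parity

section Parity2
variable {V : Type*} {k : ℕ} {G : SimpleGraph V} {f : ZMod k → V}

lemma diff_small (hG : NoShortOddCycle G k) (hko : Odd k) (hk7 : 7 ≤ k) (hf : IsCycleMap G f)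
    {x y : ZMod k} {r : ℕ} (hrk : r < k) (c : ℕ → V) (hc0 : c 0 = f y) (hcr : c r = f x)
    (hcadj : ∀ i < r, G.Adj (c i) (c (i+1))) :
    ∃ d : ℕ, d ≤ r ∧ (d + r) % 2 = 0 ∧ (y = x + (d : ℕ) ∨ x = y + (d : ℕ)) := by
  haveI : NeZero k := ⟨by omega⟩
  have hrev : ∀ i < r, G.Adj (c (r - i)) (c (r - i - 1)) := by
    intro i hi
    have h1 : r - i - 1 + 1 = r - i := by omega
    have := hcadj (r - i - 1) (by omega)
    rw [h1] at this
    exact this.symm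
  by_cases hxy : x = y
  · have h0 : (y - x).val = 0 := by rw [hxy]; simp
    rcases Nat.even_or_odd r with he | ho
    · exact ⟨0, by omega, by rcases he with ⟨e, he⟩; omega, Or.inl (by simp [hxy])⟩
    · exfalso
      have := chain_bound hG hk7 hf x y r c hc0 hcr hcadj (by rw [h0]; simpa using ho)
      omega
  · have hsum : (y - x).val + (x - y).val = k := val_add_val_neg x y hxy
    have hd1 : x + ((y - x).val : ℕ) = y := zmod_add_natCast_val x y
    have hd2 : y + ((x - y).val : ℕ) = x := zmod_add_natCast_val y x
    rcases Nat.even_or_odd ((y - x).val + r) with he | ho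
    · have ho2 : Odd ((x - y).val + r) := by
        rcases hko with ⟨e, hek⟩
        rw [Nat.even_iff] at he
        rw [Nat.odd_iff]
        omega
      have hb := chain_bound hG hk7 hf y x r (fun i => c (r - i))
        (by simpa using hcr) (by simpa using hc0) hrev ho2
      refine ⟨(y - x).val, by omega, by rw [Nat.even_iff] at he; omega, Or.inl hd1.symm⟩
    · have hb := chain_bound hG hk7 hf x y r c hc0 hcr hcadj ho
      refine ⟨(x - y).val, by omega, ?_, Or.inr hd2.symm⟩
      rw [Nat.odd_iff] at ho
      rcases hko with ⟨e, hek⟩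
      omega

variable (hG : NoShortOddCycle G k) (hko : Odd k) (hk7 : 7 ≤ k) (hf : IsCycleMap G f)
include hG hko hk7 hf

lemma adj_diff {x y : ZMod k} (h : G.Adj (f x) (f y)) : y = x + 1 ∨ x = y + 1 := by
  obtain ⟨d, hd1, hd2, hd3⟩ := diff_small hG hko hk7 hf (by omega : 1 < k)
    (fun i => if i = 0 then f y else f x) rfl rfl
    (by intro i hi; have : i = 0 := by omega
        subst this; simpa using h.symm)
  have hd : d = 1 := by omega
  subst hd
  simpa using hd3

lemma two_chain {x y : ZMod k} {u : V} (h1 : G.Adj (f x) u) (h2 : G.Adj u (f y)) :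
    y = x ∨ y = x + 2 ∨ x = y + 2 := by
  obtain ⟨d, hd1, hd2, hd3⟩ := diff_small hG hko hk7 hf (by omega : 2 < k)
    (fun i => if i = 0 then f y else if i = 1 then u else f x) rfl rfl
    (by intro i hi
        rcases (by omega : i = 0 ∨ i = 1) with h | h <;> subst h <;> simpa using by first | exact h2.symm | exact h1.symm)
  rcases (by omega : d = 0 ∨ d = 2) with h | h <;> subst h
  · rcases hd3 with h | h
    · exact Or.inl (by simpa using h)
    · exact Or.inl (by simpa using h.symm)
  · rcases hd3 with h | h
    · exact Or.inr (Or.inl (by push_cast at h; exact h))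
    · exact Or.inr (Or.inr (by push_cast at h; exact h))

lemma three_chain {x y : ZMod k} {u1 u2 : V} (h1 : G.Adj (f x) u1) (h2 : G.Adj u1 u2)
    (h3 : G.Adj u2 (f y)) :
    y = x + 1 ∨ x = y + 1 ∨ y = x + 3 ∨ x = y + 3 := by
  obtain ⟨d, hd1, hd2, hd3⟩ := diff_small hG hko hk7 hf (by omega : 3 < k)
    (fun i => if i = 0 then f y else if i = 1 then u2 else if i = 2 then u1 else f x) rfl rfl
    (by intro i hi
        rcases (by omega : i = 0 ∨ i = 1 ∨ i = 2) with h | h | h <;> subst h <;>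
          simpa using by first | exact h3.symm | exact h2.symm | exact h1.symm)
  rcases (by omega : d = 1 ∨ d = 3) with h | h <;> subst h <;>
    rcases hd3 with h | h
  · exact Or.inl (by push_cast at h; exact h)
  · exact Or.inr (Or.inl (by push_cast at h; exact h))
  · exact Or.inr (Or.inr (Or.inl (by push_cast at h; exact h)))
  · exact Or.inr (Or.inr (Or.inr (by push_cast at h; exact h)))

lemma four_chain {x y : ZMod k} {u1 u2 u3 : V} (h1 : G.Adj (f x) u1) (h2 : G.Adj u1 u2)
    (h3 : G.Adj u2 u3) (h4 : G.Adj u3 (f y)) :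
    y = x ∨ y = x + 2 ∨ x = y + 2 ∨ y = x + 4 ∨ x = y + 4 := by
  obtain ⟨d, hd1, hd2, hd3⟩ := diff_small hG hko hk7 hf (by omega : 4 < k)
    (fun i => if i = 0 then f y else if i = 1 then u3 else if i = 2 then u2 else
      if i = 3 then u1 else f x) rfl rfl
    (by intro i hi
        rcases (by omega : i = 0 ∨ i = 1 ∨ i = 2 ∨ i = 3) with h | h | h | h <;> subst h <;>
          simpa using by first | exact h4.symm | exact h3.symm | exact h2.symm | exact h1.symm)
  rcases (by omega : d = 0 ∨ d = 2 ∨ d = 4) with h | h | h <;> subst h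
  · rcases hd3 with h | h
    · exact Or.inl (by simpa using h)
    · exact Or.inl (by simpa using h.symm)
  · rcases hd3 with h | h
    · exact Or.inr (Or.inl (by push_cast at h; exact h))
    · exact Or.inr (Or.inr (Or.inl (by push_cast at h; exact h)))
  · rcases hd3 with h | h
    · exact Or.inr (Or.inr (Or.inr (Or.inl (by push_cast at h; exact h))))
    · exact Or.inr (Or.inr (Or.inr (Or.inr (by push_cast at h; exact h))))

end Parity2

section DistTwo
variable {V : Type*} (G : SimpleGraph V)

lemma dist_two_iff (x y : V) :
    G.dist x y = 2 ↔ x ≠ y ∧ ¬ G.Adj x y ∧ ∃ u, G.Adj x u ∧ G.Adj u y := by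
  constructor
  · intro h
    have hne : x ≠ y := by
      rintro rfl; rw [SimpleGraph.dist_self] at h; omega
    have hnadj : ¬ G.Adj x y := by
      intro hadj
      rw [← SimpleGraph.dist_eq_one_iff_adj] at hadj
      omega
    refine ⟨hne, hnadj, ?_⟩
    have hreach : G.Reachable x y := by
      by_contra hr
      rw [SimpleGraph.dist_eq_zero_iff_eq_or_not_reachable.mpr (Or.inr hr)] at h
      omega
    obtain ⟨p, hp⟩ := hreach.exists_walk_length_eq_dist
    rw [h] at hp
    cases p with
    | nil => simp at hp
    | @cons _ b _ h1 q =>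
      cases q with
      | nil => simp at hp
      | cons h2 q' =>
        have hq' : q'.length = 0 := by
          simp only [SimpleGraph.Walk.length_cons] at hp; omega
        have := SimpleGraph.Walk.eq_of_length_eq_zero hq'
        subst this
        exact ⟨b, h1, h2⟩
  · rintro ⟨hne, hnadj, u, h1, h2⟩
    have hle : G.dist x y ≤ 2 := by
      have := SimpleGraph.dist_le (SimpleGraph.Walk.cons h1 (SimpleGraph.Walk.cons h2 SimpleGraph.Walk.nil))
      simpa using this
    have h0 : G.dist x y ≠ 0 := by
      intro h
      rcases SimpleGraph.dist_eq_zero_iff_eq_or_not_reachable.mp h with h' | h'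
      · exact hne h'
      · exact h' ⟨SimpleGraph.Walk.cons h1 (SimpleGraph.Walk.cons h2 SimpleGraph.Walk.nil)⟩
    have h1' : G.dist x y ≠ 1 := by
      intro h
      exact hnadj (SimpleGraph.dist_eq_one_iff_adj.mp h)
    omega

end DistTwo


section Struct
variable {V : Type*} {k : ℕ} {G : SimpleGraph V} {f : ZMod k → V}

lemma cast_inj_lt [NeZero k] {a b : ℕ} (ha : a < k) (hb : b < k) (h : (a : ZMod k) = b) :
    a = b := by
  rw [← ZMod.val_cast_of_lt ha, ← ZMod.val_cast_of_lt hb, h]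

lemma lit_nz (hk7 : 7 ≤ k) {m : ℕ} (h1 : 0 < m) (h2 : m < k) : (m : ZMod k) ≠ 0 := by
  haveI : NeZero k := ⟨by omega⟩
  rw [Ne, ZMod.natCast_eq_zero_iff]
  intro hdvd
  exact absurd (Nat.le_of_dvd h1 hdvd) (by omega)

lemma eight_nz (hko : Odd k) (hk7 : 7 ≤ k) : ((8 : ℕ) : ZMod k) ≠ 0 := by
  haveI : NeZero k := ⟨by omega⟩
  rw [Ne, ZMod.natCast_eq_zero_iff]
  intro hdvd
  have h8 : k ≤ 8 := Nat.le_of_dvd (by norm_num) hdvd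
  interval_cases k
  · exact absurd hdvd (by norm_num)
  · exact absurd hko (by decide)

variable (hG : NoShortOddCycle G k) (hko : Odd k) (hk7 : 7 ≤ k) (hf : IsCycleMap G f)
include hG hko hk7 hf

lemma adj_iff (x y : ZMod k) : G.Adj (f x) (f y) ↔ (y = x + 1 ∨ x = y + 1) := by
  constructor
  · exact adj_diff hG hko hk7 hf
  · rintro (rfl | rfl)
    · exact hf.2 x
    · exact (hf.2 y).symm

lemma trichotomy (w : V) :
    (∃ a : ZMod k, ∀ i : ZMod k, G.Adj w (f i) ↔ (i = a - 1 ∨ i = a + 1)) ∨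
      (∀ b c : ZMod k, G.Adj w (f b) → G.Adj w (f c) → b = c) := by
  haveI : NeZero k := ⟨by omega⟩
  by_cases hex : ∃ b c : ZMod k, b ≠ c ∧ G.Adj w (f b) ∧ G.Adj w (f c)
  · obtain ⟨b, c, hbc, hb, hc⟩ := hex
    left
    have h2 := two_chain hG hko hk7 hf hb.symm hc
    have hstep : ∃ b' : ZMod k, G.Adj w (f b') ∧ G.Adj w (f (b' + 2)) := by
      rcases h2 with h | h | h
      · exact absurd h.symm hbc
      · exact ⟨b, hb, h ▸ hc⟩
      · exact ⟨c, hc, h ▸ hb⟩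
    obtain ⟨b', hb1, hb2⟩ := hstep
    refine ⟨b' + 1, fun i => ?_⟩
    have he1 : b' + 1 - 1 = b' := by ring
    have he2 : b' + 1 + 1 = b' + 2 := by ring
    rw [he1, he2]
    constructor
    · intro hi
      have g1 := two_chain hG hko hk7 hf hb1.symm hi
      have g2 := two_chain hG hko hk7 hf hb2.symm hi
      rcases g1 with g | g | g
      · exact Or.inl g
      · exact Or.inr g
      · -- b' = i + 2, i.e. i = b' - 2
        exfalso
        rcases g2 with g' | g' | g'
        · -- i = b' + 2 and i = b' - 2 : 4 = 0
          apply lit_nz hk7 (by norm_num : (0:ℕ) < 4) (by omega)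
          have : ((4 : ℕ) : ZMod k) = 0 := by push_cast; linear_combination -g - g'
          exact this
        · -- i = b' + 4 and i = b' - 2 : 6 = 0
          apply lit_nz hk7 (by norm_num : (0:ℕ) < 6) (by omega)
          have : ((6 : ℕ) : ZMod k) = 0 := by push_cast; linear_combination -g - g'
          exact this
        · -- b' + 2 = i + 2 so i = b' ; but b' = i + 2 gives 2 = 0
          apply lit_nz hk7 (by norm_num : (0:ℕ) < 2) (by omega)
          have : ((2 : ℕ) : ZMod k) = 0 := by push_cast; linear_combination g' - g
          exact this
    · rintro (rfl | rfl)
      · exact hb1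
      · exact hb2
  · push_neg at hex
    right
    intro b c hb hc
    by_contra hne
    exact hex b c hne hb hc

end Struct

section Mem
variable {V : Type*} {k : ℕ} {G : SimpleGraph V} {f : ZMod k → V}

lemma goodRot_apply (j i : ZMod k) (h2 : i ≠ 2) (h3 : i ≠ 3) :
    goodRot f j i = f (j + i) := by
  simp [goodRot, goodOfCycle, h2, h3]

lemma goodRot_two (j : ZMod k) : goodRot f j 2 = f (j + 3) := by
  simp [goodRot, goodOfCycle]

lemma goodRot_three (hk7 : 7 ≤ k) (j : ZMod k) : goodRot f j 3 = f (j + 2) := by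
  have h23 : (3 : ZMod k) ≠ 2 := by
    intro h
    apply lit_nz hk7 (by norm_num : (0:ℕ) < 1) (by omega)
    have : ((1 : ℕ) : ZMod k) = 0 := by push_cast; linear_combination h
    exact this
  simp [goodRot, goodOfCycle, h23]

lemma seqAt_self {z : ZMod k → V} (w : V) (i : ℕ) : seqAt z w i i = w := by
  simp [seqAt]

lemma seqAt_eval (hk7 : 7 ≤ k) (j : ZMod k) (w : V) (i a : ℕ) (hi4 : 4 ≤ i)
    (hai : a ≠ i) (hak : a ≤ k - 2) :
    seqAt (goodRot f j) w i a = f (j + (a : ℕ)) := by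
  haveI : NeZero k := ⟨by omega⟩
  unfold seqAt
  rw [if_neg hai]
  rcases eq_or_ne a 2 with rfl | ha2
  · rw [if_pos rfl, goodRot_three hk7]
    norm_num
  rcases eq_or_ne a 3 with rfl | ha3
  · rw [if_neg ha2, if_pos rfl, goodRot_two]
    norm_num
  · rw [if_neg ha2, if_neg ha3]
    refine goodRot_apply j _ ?_ ?_
    · intro h
      have h2k : ((2 : ℕ) : ZMod k) = (a : ZMod k) := by push_cast; rw [h]
      exact ha2 (cast_inj_lt (by omega) (by omega) h2k.symm)
    · intro h
      have h3k : ((3 : ℕ) : ZMod k) = (a : ZMod k) := by push_cast; rw [h]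
      exact ha3 (cast_inj_lt (by omega) (by omega) h3k.symm)

variable (hG : NoShortOddCycle G k) (hko : Odd k) (hk7 : 7 ≤ k) (hf : IsCycleMap G f)
include hG hko hk7 hf

lemma mem_Aset_path (j : ZMod k) (w : V) (i : ℕ) (hi4 : 4 ≤ i) (hik : i ≤ k - 2) :
    w ∈ Aset G k (goodRot f j) i ↔
      (G.Adj w (f (j + ((i - 1 : ℕ) : ZMod k))) ∧
        (∀ a : ℕ, a ≤ i - 2 → ¬ G.Adj w (f (j + (a : ℕ)))) ∧
        (∀ a : ℕ, a ≤ i - 1 → w ≠ f (j + (a : ℕ)))) := by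
  haveI : NeZero k := ⟨by omega⟩
  have hAset : w ∈ Aset G k (goodRot f j) i ↔ IsInducedPathOn G (seqAt (goodRot f j) w i) i := by
    unfold Aset
    rw [if_neg (by omega), if_neg (by omega), if_neg (by omega), if_neg (by omega),
      if_neg (by omega)]
    rfl
  rw [hAset]
  have hq : ∀ a : ℕ, a ≤ i - 1 → seqAt (goodRot f j) w i a = f (j + (a : ℕ)) :=
    fun a ha => seqAt_eval hk7 j w i a hi4 (by omega) (by omega)
  have hqi : seqAt (goodRot f j) w i i = w := seqAt_self w i
  constructor
  · rintro ⟨hinj, hadj⟩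
    refine ⟨?_, ?_, ?_⟩
    · have h := (hadj (i-1) i (by omega) le_rfl).mpr (Or.inl (by omega))
      rw [hq (i-1) le_rfl, hqi] at h
      exact h.symm
    · intro a ha hadj'
      have h := (hadj a i (by omega) le_rfl).mp
      rw [hq a (by omega), hqi] at h
      have := h hadj'.symm
      omega
    · intro a ha heqw
      have h := hinj i a le_rfl (by omega) (by rw [hqi, hq a ha]; exact heqw)
      omega
  · rintro ⟨h1, h2, h3⟩
    constructor
    · intro a b ha hb heq
      by_cases ha' : a = i
      · by_cases hb' : b = i
        · rw [ha', hb']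
        · rw [ha', hqi, hq b (by omega)] at heq
          exact absurd heq (h3 b (by omega))
      · by_cases hb' : b = i
        · rw [hb', hqi, hq a (by omega)] at heq
          exact absurd heq.symm (h3 a (by omega))
        · rw [hq a (by omega), hq b (by omega)] at heq
          have h' := hf.1 heq
          have hab : (a : ZMod k) = (b : ZMod k) := add_left_cancel h'
          exact cast_inj_lt (by omega) (by omega) hab
    · intro a b ha hb
      by_cases ha' : a = i
      · by_cases hb' : b = i
        · rw [ha', hb', hqi]
          exact iff_of_false G.irrefl (by omega)
        · rw [ha', hqi, hq b (by omega)]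
          by_cases hb1 : b = i - 1
          · refine iff_of_true ?_ (by omega)
            rw [hb1]
            exact h1
          · refine iff_of_false ?_ (by omega)
            exact h2 b (by omega)
      · by_cases hb' : b = i
        · rw [hb', hqi, hq a (by omega)]
          by_cases ha1 : a = i - 1
          · refine iff_of_true ?_ (by omega)
            rw [ha1]
            exact h1.symm
          · refine iff_of_false ?_ (by omega)
            intro hadj'
            exact h2 a (by omega) hadj'.symm
        · rw [hq a (by omega), hq b (by omega)]
          rw [adj_iff hG hko hk7 hf]
          constructor
          · rintro (h | h)
            · left
              have hc : ((b : ℕ) : ZMod k) = ((a + 1 : ℕ) : ZMod k) := by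
                push_cast
                linear_combination h
              exact cast_inj_lt (by omega) (by omega) hc
            · right
              have hc : ((a : ℕ) : ZMod k) = ((b + 1 : ℕ) : ZMod k) := by
                push_cast
                linear_combination h
              exact cast_inj_lt (by omega) (by omega) hc
          · rintro (rfl | rfl)
            · left; push_cast; ring
            · right; push_cast; ring

end Mem

section Mem2
variable {V : Type*} {k : ℕ} {G : SimpleGraph V} {f : ZMod k → V}

lemma zmod_lit_ne (hk7 : 7 ≤ k) {m m' : ℕ} (hm : m < k) (hm' : m' < k) (h : m ≠ m') :
    (m : ZMod k) ≠ (m' : ZMod k) := by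
  haveI : NeZero k := ⟨by omega⟩
  exact fun he => h (cast_inj_lt hm hm' he)

variable (hG : NoShortOddCycle G k) (hko : Odd k) (hk7 : 7 ≤ k) (hf : IsCycleMap G f)
include hG hko hk7 hf

lemma mem_Aset_one (j : ZMod k) (w : V) :
    w ∈ Aset G k (goodRot f j) 1 ↔ G.Adj (f j) w := by
  have h0 : goodRot f j 0 = f j := by
    rw [goodRot_apply j 0 ?h2 ?h3, add_zero]
    case h2 =>
      have := zmod_lit_ne hk7 (by omega : 0 < k) (by omega : 2 < k) (by omega)
      push_cast at this; exact this
    case h3 =>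
      have := zmod_lit_ne hk7 (by omega : 0 < k) (by omega : 3 < k) (by omega)
      push_cast at this; exact this
  unfold Aset
  rw [if_neg (by omega), if_pos rfl, h0]
  simp [SimpleGraph.mem_neighborSet]

lemma goodRot_one (hk7' : 7 ≤ k) (j : ZMod k) : goodRot f j 1 = f (j + 1) := by
  rw [goodRot_apply j 1 ?h2 ?h3]
  case h2 =>
    have := zmod_lit_ne hk7' (by omega : 1 < k) (by omega : 2 < k) (by omega)
    push_cast at this; exact this
  case h3 =>
    have := zmod_lit_ne hk7' (by omega : 1 < k) (by omega : 3 < k) (by omega)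
    push_cast at this; exact this

lemma mem_Aset_two (j : ZMod k) (w : V) :
    w ∈ Aset G k (goodRot f j) 2 ↔ ¬ G.Adj (f j) w ∧ G.dist (f (j + 1)) w = 2 := by
  have h0 : goodRot f j 0 = f j := by
    rw [goodRot_apply j 0 ?h2 ?h3, add_zero]
    case h2 =>
      have := zmod_lit_ne hk7 (by omega : 0 < k) (by omega : 2 < k) (by omega)
      push_cast at this; exact this
    case h3 =>
      have := zmod_lit_ne hk7 (by omega : 0 < k) (by omega : 3 < k) (by omega)
      push_cast at this; exact this
  unfold Aset
  rw [if_neg (by omega), if_neg (by omega), if_pos rfl, h0, goodRot_one hG hko hk7 hf hk7]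
  simp [SimpleGraph.mem_neighborSet]

lemma mem_Aset_three (j : ZMod k) (w : V) :
    w ∈ Aset G k (goodRot f j) 3 ↔ G.Adj (f (j + 1)) w ∧ G.Adj (f (j + 3)) w := by
  unfold Aset
  rw [if_neg (by omega), if_neg (by omega), if_neg (by omega), if_pos rfl,
    goodRot_one hG hko hk7 hf hk7, goodRot_two]
  simp [SimpleGraph.mem_neighborSet]

lemma mem_Aset_cycle (j : ZMod k) (w : V) :
    w ∈ Aset G k (goodRot f j) (k - 1) ↔
      (G.Adj w (f j) ∧ G.Adj w (f (j + ((k - 2 : ℕ) : ZMod k))) ∧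
        (∀ a : ℕ, 1 ≤ a → a ≤ k - 3 → ¬ G.Adj w (f (j + (a : ℕ)))) ∧
        (∀ a : ℕ, a ≤ k - 2 → w ≠ f (j + (a : ℕ)))) := by
  haveI : NeZero k := ⟨by omega⟩
  have hAset : w ∈ Aset G k (goodRot f j) (k - 1) ↔
      IsInducedCycleOn G (seqAt (goodRot f j) w (k - 1)) k := by
    unfold Aset
    rw [if_neg (by omega), if_neg (by omega), if_neg (by omega), if_neg (by omega), if_pos rfl]
    rfl
  rw [hAset]
  have hq : ∀ a : ℕ, a ≤ k - 2 → seqAt (goodRot f j) w (k - 1) a = f (j + (a : ℕ)) :=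
    fun a ha => seqAt_eval hk7 j w (k - 1) a (by omega) (by omega) (by omega)
  have hqi : seqAt (goodRot f j) w (k - 1) (k - 1) = w := seqAt_self w (k - 1)
  constructor
  · rintro ⟨hinj, hadj⟩
    refine ⟨?_, ?_, ?_, ?_⟩
    · have h := (hadj (k-1) 0 (by omega) (by omega)).mpr (by omega)
      rw [hqi, hq 0 (by omega)] at h
      simpa using h
    · have h := (hadj (k-1) (k-2) (by omega) (by omega)).mpr (by omega)
      rw [hqi, hq (k-2) (by omega)] at h
      exact h
    · intro a ha1 ha2 hadj'
      have h := (hadj (k-1) a (by omega) (by omega)).mp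
      rw [hqi, hq a (by omega)] at h
      have := h hadj'
      omega
    · intro a ha heqw
      have h := hinj (k-1) a (by omega) (by omega) (by rw [hqi, hq a ha]; exact heqw)
      omega
  · rintro ⟨h1, h2, h3, h4⟩
    constructor
    · intro a b ha hb heq
      by_cases ha' : a = k - 1
      · by_cases hb' : b = k - 1
        · rw [ha', hb']
        · rw [ha', hqi, hq b (by omega)] at heq
          exact absurd heq (h4 b (by omega))
      · by_cases hb' : b = k - 1
        · rw [hb', hqi, hq a (by omega)] at heq
          exact absurd heq.symm (h4 a (by omega))
        · rw [hq a (by omega), hq b (by omega)] at heq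
          have h' := hf.1 heq
          have hab : (a : ZMod k) = (b : ZMod k) := add_left_cancel h'
          exact cast_inj_lt (by omega) (by omega) hab
    · intro a b ha hb
      by_cases ha' : a = k - 1
      · by_cases hb' : b = k - 1
        · rw [ha', hb', hqi]
          exact iff_of_false G.irrefl (by omega)
        · rw [ha', hqi, hq b (by omega)]
          by_cases hb0 : b = 0
          · refine iff_of_true ?_ (by omega)
            rw [hb0]
            simpa using h1
          · by_cases hb2 : b = k - 2
            · refine iff_of_true ?_ (by omega)
              rw [hb2]
              exact h2
            · refine iff_of_false ?_ (by omega)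
              exact h3 b (by omega) (by omega)
      · by_cases hb' : b = k - 1
        · rw [hb', hqi, hq a (by omega)]
          by_cases ha0 : a = 0
          · refine iff_of_true ?_ (by omega)
            rw [ha0]
            have := h1.symm
            simpa using this
          · by_cases ha2 : a = k - 2
            · refine iff_of_true ?_ (by omega)
              rw [ha2]
              exact h2.symm
            · refine iff_of_false ?_ (by omega)
              intro hadj'
              exact h3 a (by omega) (by omega) hadj'.symm
        · rw [hq a (by omega), hq b (by omega)]
          rw [adj_iff hG hko hk7 hf]
          constructor
          · rintro (h | h)
            · have hc : ((b : ℕ) : ZMod k) = ((a + 1 : ℕ) : ZMod k) := by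
                push_cast
                linear_combination h
              have := cast_inj_lt (by omega) (by omega) hc
              omega
            · have hc : ((a : ℕ) : ZMod k) = ((b + 1 : ℕ) : ZMod k) := by
                push_cast
                linear_combination h
              have := cast_inj_lt (by omega) (by omega) hc
              omega
          · intro h
            have h' : b = a + 1 ∨ a = b + 1 := by omega
            rcases h' with rfl | rfl
            · left; push_cast; ring
            · right; push_cast; ring

end Mem2

section CountPrep
open Finset

variable {V : Type*} {k : ℕ} {G : SimpleGraph V} {f : ZMod k → V}

lemma nz_even_small (hko : Odd k) (hk7 : 7 ≤ k) {m : ℕ} (h1 : 0 < m) (h2 : m ≤ 12)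
    (he : m % 2 = 0) : (m : ZMod k) ≠ 0 := by
  haveI : NeZero k := ⟨by omega⟩
  rw [Ne, ZMod.natCast_eq_zero_iff]
  intro hdvd
  have hkle : k ≤ m := Nat.le_of_dvd h1 hdvd
  have hkle' : k ≤ 12 := le_trans hkle h2
  have hko' : k % 2 = 1 := Nat.odd_iff.mp hko
  interval_cases k <;> omega

lemma castsub (hk7 : 7 ≤ k) {m : ℕ} (hm : m ≤ k) : ((k - m : ℕ) : ZMod k) = -(m : ℕ) := by
  haveI : NeZero k := ⟨by omega⟩
  have : ((k - m : ℕ) : ZMod k) = ((k : ℕ) : ZMod k) - (m : ℕ) := by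
    push_cast [Nat.cast_sub hm]
    ring
  rw [this, ZMod.natCast_self]
  ring

/-- The set of `j` such that `w ∈ A_i(D_j)`. -/
noncomputable def Jset (G : SimpleGraph V) (k : ℕ) [NeZero k] (f : ZMod k → V) (w : V) (i : ℕ) :
    Finset (ZMod k) := by
  classical
  exact Finset.univ.filter (fun j => w ∈ Aset G k (goodRot f j) i)

lemma mem_Jset [NeZero k] {w : V} {i : ℕ} {j : ZMod k} :
    j ∈ Jset G k f w i ↔ w ∈ Aset G k (goodRot f j) i := by
  classical
  simp [Jset]

/-- The set of cycle positions at distance 2 from `w`. -/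
noncomputable def Bset (G : SimpleGraph V) (k : ℕ) [NeZero k] (f : ZMod k → V) (w : V) :
    Finset (ZMod k) := by
  classical
  exact Finset.univ.filter (fun b => G.dist (f b) w = 2)

lemma mem_Bset [NeZero k] {w : V} {b : ZMod k} : b ∈ Bset G k f w ↔ G.dist (f b) w = 2 := by
  classical
  simp [Bset]

variable (hG : NoShortOddCycle G k) (hko : Odd k) (hk7 : 7 ≤ k) (hf : IsCycleMap G f)
include hG hko hk7 hf

lemma Bset_pair [NeZero k] {w : V} {b c : ZMod k} (hb : b ∈ Bset G k f w) (hc : c ∈ Bset G k f w) :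
    c = b ∨ c = b + 2 ∨ b = c + 2 ∨ c = b + 4 ∨ b = c + 4 := by
  rw [mem_Bset] at hb hc
  obtain ⟨-, -, ub, hub1, hub2⟩ := (dist_two_iff G _ _).mp hb
  obtain ⟨-, -, uc, huc1, huc2⟩ := (dist_two_iff G _ _).mp hc
  exact four_chain hG hko hk7 hf hub1 hub2 huc2.symm huc1.symm

lemma card_le_three_of_pair {B : Finset (ZMod k)}
    (hpair : ∀ b ∈ B, ∀ c ∈ B, c = b ∨ c = b + 2 ∨ b = c + 2 ∨ c = b + 4 ∨ b = c + 4) :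
    B.card ≤ 3 := by
  haveI : NeZero k := ⟨by omega⟩
  rcases B.eq_empty_or_nonempty with rfl | ⟨b, hb⟩
  · simp
  have key : ∀ m m' : ℕ, 0 < m + m' → m + m' ≤ 12 → (m + m') % 2 = 0 →
      b + (m : ℕ) ≠ b - (m' : ℕ) := by
    intro m m' hp hle hev heq
    apply nz_even_small hko hk7 hp hle hev
    push_cast
    linear_combination heq
  -- any element is in {b-4, b-2, b, b+2, b+4}
  have h5 : ∀ e ∈ B, e = b - 4 ∨ e = b - 2 ∨ e = b ∨ e = b + 2 ∨ e = b + 4 := by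
    intro e he
    rcases hpair b hb e he with h | h | h | h | h
    · exact Or.inr (Or.inr (Or.inl h))
    · exact Or.inr (Or.inr (Or.inr (Or.inl h)))
    · exact Or.inr (Or.inl (by linear_combination -h))
    · exact Or.inr (Or.inr (Or.inr (Or.inr h)))
    · exact Or.inl (by linear_combination -h)
  have hender : ∀ m m' : ℕ, m ≤ 4 → m' ≤ 4 → 0 < m + m' → (m + m') % 2 = 0 →
      b + (m : ℕ) ∈ B → b - (m' : ℕ) ∈ B → m + m' ≤ 4 := by
    intro m m' hm hm' hp hev hmem hmem'
    by_contra hcon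
    have keyz : ∀ n : ℕ, 0 < n → n ≤ 12 → n % 2 = 0 → ((n : ℕ) : ZMod k) ≠ 0 :=
      fun n a b c => nz_even_small hko hk7 a b c
    rcases hpair _ hmem' _ hmem with h | h | h | h | h
    · exact keyz (m + m') (by omega) (by omega) (by omega)
        (by push_cast; linear_combination h)
    · exact keyz (m + m' - 2) (by omega) (by omega) (by omega)
        (by push_cast [Nat.cast_sub (by omega : 2 ≤ m + m')]; linear_combination h)
    · exact keyz (m + m' + 2) (by omega) (by omega) (by omega)
        (by push_cast; linear_combination -h)
    · exact keyz (m + m' - 4) (by omega) (by omega) (by omega)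
        (by push_cast [Nat.cast_sub (by omega : 4 ≤ m + m')]; linear_combination h)
    · exact keyz (m + m' + 4) (by omega) (by omega) (by omega)
        (by push_cast; linear_combination -h)
  by_cases h4m : b - 4 ∈ B
  · have hsub : B ⊆ {b - 4, b - 2, b} := by
      intro e he
      rcases h5 e he with h | h | h | h | h
      · simp [h]
      · simp [h]
      · simp [h]
      · exfalso
        have := hender 2 4 (by omega) (by omega) (by omega) (by omega)
          (by rw [show ((2:ℕ) : ZMod k) = 2 by push_cast; ring, ← h]; exact he)
          (by rw [show ((4:ℕ) : ZMod k) = 4 by push_cast; ring]; exact h4m)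
        omega
      · exfalso
        have := hender 4 4 (by omega) (by omega) (by omega) (by omega)
          (by rw [show ((4:ℕ) : ZMod k) = 4 by push_cast; ring, ← h]; exact he)
          (by rw [show ((4:ℕ) : ZMod k) = 4 by push_cast; ring]; exact h4m)
        omega
    calc B.card ≤ ({b - 4, b - 2, b} : Finset (ZMod k)).card := Finset.card_le_card hsub
      _ ≤ 3 := by
          apply le_trans (Finset.card_insert_le _ _)
          have := Finset.card_insert_le (b - 2) ({b} : Finset (ZMod k))
          simp at this ⊢
          omega
  · by_cases h4p : b + 4 ∈ B
    · have hsub : B ⊆ {b, b + 2, b + 4} := by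
        intro e he
        rcases h5 e he with h | h | h | h | h
        · exact absurd (h ▸ he) h4m
        · exfalso
          have := hender 4 2 (by omega) (by omega) (by omega) (by omega)
            (by rw [show ((4:ℕ) : ZMod k) = 4 by push_cast; ring]; exact h4p)
            (by rw [show ((2:ℕ) : ZMod k) = 2 by push_cast; ring, ← h]; exact he)
          omega
        · simp [h]
        · simp [h]
        · simp [h]
      calc B.card ≤ ({b, b + 2, b + 4} : Finset (ZMod k)).card := Finset.card_le_card hsub
        _ ≤ 3 := by
            apply le_trans (Finset.card_insert_le _ _)
            have := Finset.card_insert_le (b + 2) ({b + 4} : Finset (ZMod k))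
            simp at this ⊢
            omega
    · have hsub : B ⊆ {b - 2, b, b + 2} := by
        intro e he
        rcases h5 e he with h | h | h | h | h
        · exact absurd (h ▸ he) h4m
        · simp [h]
        · simp [h]
        · simp [h]
        · exact absurd (h ▸ he) h4p
      calc B.card ≤ ({b - 2, b, b + 2} : Finset (ZMod k)).card := Finset.card_le_card hsub
        _ ≤ 3 := by
            apply le_trans (Finset.card_insert_le _ _)
            have := Finset.card_insert_le b ({b + 2} : Finset (ZMod k))
            simp at this ⊢
            omega

lemma Bset_card_le [NeZero k] (w : V) : (Bset G k f w).card ≤ 3 :=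
  card_le_three_of_pair hG hko hk7 hf (fun b hb c hc => Bset_pair hG hko hk7 hf hb hc)

end CountPrep

section Count2
open Finset

variable {V : Type*} {k : ℕ} {G : SimpleGraph V} {f : ZMod k → V}

variable (hG : NoShortOddCycle G k) (hko : Odd k) (hk7 : 7 ≤ k) (hf : IsCycleMap G f)
include hG hko hk7 hf

lemma Jset_one_bad [NeZero k] {w : V}
    (hSbad : ∀ b c : ZMod k, G.Adj w (f b) → G.Adj w (f c) → b = c) :
    (Jset G k f w 1).card ≤ 1 := by
  rw [Finset.card_le_one]
  intro j hj j' hj'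
  rw [mem_Jset, mem_Aset_one hG hko hk7 hf] at hj hj'
  exact hSbad j j' hj.symm hj'.symm

lemma Jset_three_bad [NeZero k] {w : V}
    (hSbad : ∀ b c : ZMod k, G.Adj w (f b) → G.Adj w (f c) → b = c) :
    Jset G k f w 3 = ∅ := by
  rw [Finset.eq_empty_iff_forall_notMem]
  intro j hj
  rw [mem_Jset, mem_Aset_three hG hko hk7 hf] at hj
  have h := hSbad (j+1) (j+3) hj.1.symm hj.2.symm
  exact lit_nz hk7 (by omega : 0 < 2) (by omega) (by push_cast; linear_combination -h)

lemma Jset_cycle_bad [NeZero k] {w : V}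
    (hSbad : ∀ b c : ZMod k, G.Adj w (f b) → G.Adj w (f c) → b = c) :
    Jset G k f w (k - 1) = ∅ := by
  rw [Finset.eq_empty_iff_forall_notMem]
  intro j hj
  rw [mem_Jset, mem_Aset_cycle hG hko hk7 hf] at hj
  have h := hSbad j (j + ((k - 2 : ℕ) : ZMod k)) hj.1 hj.2.1
  have h2 : ((k - 2 : ℕ) : ZMod k) = 0 := by linear_combination -h
  exact lit_nz hk7 (by omega : 0 < k - 2) (by omega) h2

lemma Jset_path_bad [NeZero k] {w : V} {i : ℕ} (hi4 : 4 ≤ i) (hik : i ≤ k - 2)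
    (hSbad : ∀ b c : ZMod k, G.Adj w (f b) → G.Adj w (f c) → b = c) :
    (Jset G k f w i).card ≤ 1 := by
  rw [Finset.card_le_one]
  intro j hj j' hj'
  rw [mem_Jset, mem_Aset_path hG hko hk7 hf j w i hi4 hik] at hj
  rw [mem_Jset, mem_Aset_path hG hko hk7 hf j' w i hi4 hik] at hj'
  have h := hSbad _ _ hj.1 hj'.1
  exact add_right_cancel h

lemma Jset_two_le [NeZero k] (w : V) : (Jset G k f w 2).card ≤ 3 := by
  have hsub : ∀ j ∈ Jset G k f w 2, j + 1 ∈ Bset G k f w := by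
    intro j hj
    rw [mem_Jset, mem_Aset_two hG hko hk7 hf] at hj
    rw [mem_Bset]
    exact hj.2
  have hinj : Set.InjOn (fun j : ZMod k => j + 1) (Jset G k f w 2) := by
    intro x _ y _ h
    simpa using h
  calc (Jset G k f w 2).card ≤ (Bset G k f w).card :=
        Finset.card_le_card_of_injOn _ hsub hinj
    _ ≤ 3 := Bset_card_le hG hko hk7 hf w

-- Good case

lemma good_vertex_cases [NeZero k] {w : V} {a : ZMod k}
    (hS : ∀ i : ZMod k, G.Adj w (f i) ↔ (i = a - 1 ∨ i = a + 1)) :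
    w ∉ Set.range f ∨ w = f a := by
  by_cases hw : w ∈ Set.range f
  · obtain ⟨b, rfl⟩ := hw
    right
    have hb1 : b + 1 = a - 1 ∨ b + 1 = a + 1 := (hS (b+1)).mp (hf.2 b)
    have hb2 : b - 1 = a - 1 ∨ b - 1 = a + 1 := by
      refine (hS (b-1)).mp ?_
      have := hf.2 (b - 1)
      have h1 : b - 1 + 1 = b := by ring
      rw [h1] at this
      exact this.symm
    rcases hb1 with h | h
    · rcases hb2 with h' | h'
      · exact absurd (show ((2:ℕ) : ZMod k) = 0 by push_cast; linear_combination h - h')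
          (lit_nz hk7 (by omega) (by omega))
      · exact absurd (show ((4:ℕ) : ZMod k) = 0 by push_cast; linear_combination h - h')
          (lit_nz hk7 (by omega) (by omega))
    · rcases hb2 with h' | h'
      · congr 1
        linear_combination h
      · exact absurd (show ((2:ℕ) : ZMod k) = 0 by push_cast; linear_combination h - h')
          (lit_nz hk7 (by omega) (by omega))
  · exact Or.inl hw

lemma Jset_one_good [NeZero k] {w : V} {a : ZMod k}
    (hS : ∀ i : ZMod k, G.Adj w (f i) ↔ (i = a - 1 ∨ i = a + 1)) :
    (Jset G k f w 1).card = 2 := by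
  have hset : Jset G k f w 1 = {a - 1, a + 1} := by
    ext j
    rw [mem_Jset, mem_Aset_one hG hko hk7 hf, Finset.mem_insert, Finset.mem_singleton]
    rw [G.adj_comm]
    exact hS j
  rw [hset]
  rw [Finset.card_insert_of_notMem, Finset.card_singleton]
  rw [Finset.mem_singleton]
  intro h
  exact lit_nz hk7 (by omega : 0 < 2) (by omega) (by push_cast; linear_combination -h)

lemma Jset_three_good [NeZero k] {w : V} {a : ZMod k}
    (hS : ∀ i : ZMod k, G.Adj w (f i) ↔ (i = a - 1 ∨ i = a + 1)) :
    Jset G k f w 3 = {a - 2} := by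
  ext j
  rw [mem_Jset, mem_Aset_three hG hko hk7 hf, Finset.mem_singleton]
  constructor
  · rintro ⟨h1, h2⟩
    rw [G.adj_comm] at h1 h2
    rcases (hS _).mp h1 with h | h
    · rcases (hS _).mp h2 with h' | h'
      · exact absurd (show ((2:ℕ) : ZMod k) = 0 by push_cast; linear_combination h' - h)
          (lit_nz hk7 (by omega) (by omega))
      · linear_combination h
    · rcases (hS _).mp h2 with h' | h'
      · exact absurd (show ((4:ℕ) : ZMod k) = 0 by push_cast; linear_combination h' - h)
          (lit_nz hk7 (by omega) (by omega))
      · exact absurd (show ((2:ℕ) : ZMod k) = 0 by push_cast; linear_combination h' - h)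
          (lit_nz hk7 (by omega) (by omega))
  · rintro rfl
    constructor
    · rw [G.adj_comm]
      refine (hS _).mpr (Or.inl ?_)
      ring
    · rw [G.adj_comm]
      refine (hS _).mpr (Or.inr ?_)
      ring

end Count2

section Count3
open Finset

variable {V : Type*} {k : ℕ} {G : SimpleGraph V} {f : ZMod k → V}

variable (hG : NoShortOddCycle G k) (hko : Odd k) (hk7 : 7 ≤ k) (hf : IsCycleMap G f)
include hG hko hk7 hf

lemma dist_two_set_good [NeZero k] {w : V} {a : ZMod k}
    (hS : ∀ i : ZMod k, G.Adj w (f i) ↔ (i = a - 1 ∨ i = a + 1)) (b : ZMod k) :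
    G.dist (f b) w = 2 ↔ (b = a - 2 ∨ b = a + 2 ∨ (b = a ∧ w ≠ f a)) := by
  have hm : G.Adj w (f (a - 1)) := (hS _).mpr (Or.inl rfl)
  have hp : G.Adj w (f (a + 1)) := (hS _).mpr (Or.inr rfl)
  constructor
  · intro h
    obtain ⟨hne, hnadj, u, hu1, hu2⟩ := (dist_two_iff G _ _).mp h
    have c1 := three_chain hG hko hk7 hf hu1 hu2 hm
    have c2 := three_chain hG hko hk7 hf hu1 hu2 hp
    rcases c1 with h1 | h1 | h1 | h1
    · exact Or.inl (by linear_combination -h1)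
    · refine Or.inr (Or.inr ⟨by linear_combination h1, ?_⟩)
      intro he
      apply hne
      rw [show b = a by linear_combination h1, ← he]
    · -- a - 1 = b + 3, i.e. b = a - 4 : contradiction via c2
      exfalso
      rcases c2 with h2 | h2 | h2 | h2
      · exact lit_nz hk7 (by omega : 0 < 4) (by omega)
          (by push_cast; linear_combination h2 - h1)
      · exact lit_nz hk7 (by omega : 0 < 6) (by omega)
          (by push_cast; linear_combination - h1 - h2)
      · exact lit_nz hk7 (by omega : 0 < 2) (by omega)
          (by push_cast; linear_combination h2 - h1)
      · exact nz_even_small hko hk7 (by omega : 0 < 8) (by omega) (by omega)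
          (by push_cast; linear_combination - h1 - h2)
    · exact Or.inr (Or.inl (by linear_combination h1))
  · have hvc := good_vertex_cases hG hko hk7 hf hS
    rintro (rfl | rfl | ⟨rfl, hw⟩)
    · rw [dist_two_iff]
      refine ⟨?_, ?_, f (a - 1), ?_, hm.symm⟩
      · intro he
        rcases hvc with hr | hr
        · exact hr ⟨_, he⟩
        · rw [hr] at he
          have := hf.1 he
          exact lit_nz hk7 (by omega : 0 < 2) (by omega)
            (by push_cast; linear_combination -this)
      · intro hadj
        rcases (hS _).mp hadj.symm with h | h
        · exact lit_nz hk7 (by omega : 0 < 1) (by omega)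
            (by push_cast; linear_combination -h)
        · exact lit_nz hk7 (by omega : 0 < 3) (by omega)
            (by push_cast; linear_combination -h)
      · exact (adj_iff hG hko hk7 hf _ _).mpr (Or.inl (by ring))
    · rw [dist_two_iff]
      refine ⟨?_, ?_, f (a + 1), ?_, hp.symm⟩
      · intro he
        rcases hvc with hr | hr
        · exact hr ⟨_, he⟩
        · rw [hr] at he
          have := hf.1 he
          exact lit_nz hk7 (by omega : 0 < 2) (by omega)
            (by push_cast; linear_combination this)
      · intro hadj
        rcases (hS _).mp hadj.symm with h | h
        · exact lit_nz hk7 (by omega : 0 < 3) (by omega)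
            (by push_cast; linear_combination h)
        · exact lit_nz hk7 (by omega : 0 < 1) (by omega)
            (by push_cast; linear_combination h)
      · exact (adj_iff hG hko hk7 hf _ _).mpr (Or.inr (by ring))
    · rw [dist_two_iff]
      refine ⟨fun he => hw he.symm, ?_, f (b + 1), hf.2 b, hp.symm⟩
      intro hadj
      rcases (hS _).mp hadj.symm with h | h
      · exact lit_nz hk7 (by omega : 0 < 1) (by omega)
          (by push_cast; linear_combination h)
      · exact lit_nz hk7 (by omega : 0 < 1) (by omega)
          (by push_cast; linear_combination -h)

lemma Jset_two_good [NeZero k] {w : V} {a : ZMod k}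
    (hS : ∀ i : ZMod k, G.Adj w (f i) ↔ (i = a - 1 ∨ i = a + 1)) :
    Jset G k f w 2 = {a - 3} := by
  ext j
  rw [mem_Jset, mem_Aset_two hG hko hk7 hf, Finset.mem_singleton,
    dist_two_set_good hG hko hk7 hf hS]
  constructor
  · rintro ⟨hnadj, hd⟩
    rcases hd with h | h | ⟨h, hw⟩
    · linear_combination h
    · exfalso
      apply hnadj
      exact ((hS j).mpr (Or.inr (by linear_combination h))).symm
    · exfalso
      apply hnadj
      exact ((hS j).mpr (Or.inl (by linear_combination h))).symm
  · rintro rfl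
    constructor
    · intro hadj
      rcases (hS _).mp hadj.symm with h | h
      · exact lit_nz hk7 (by omega : 0 < 2) (by omega)
          (by push_cast; linear_combination -h)
      · exact lit_nz hk7 (by omega : 0 < 4) (by omega)
          (by push_cast; linear_combination -h)
    · exact Or.inl (by ring)

lemma Jset_path_good [NeZero k] {w : V} {a : ZMod k} {i : ℕ} (hi4 : 4 ≤ i) (hik : i ≤ k - 2)
    (hS : ∀ i : ZMod k, G.Adj w (f i) ↔ (i = a - 1 ∨ i = a + 1)) :
    Jset G k f w i = {a - ((i : ℕ) : ZMod k)} := by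
  have hc1 : ((i - 1 : ℕ) : ZMod k) = ((i : ℕ) : ZMod k) - 1 := by
    push_cast [Nat.cast_sub (show 1 ≤ i by omega)]
    ring
  have hc3 : ((i - 3 : ℕ) : ZMod k) = ((i : ℕ) : ZMod k) - 3 := by
    push_cast [Nat.cast_sub (show 3 ≤ i by omega)]
    ring
  ext j
  rw [mem_Jset, mem_Aset_path hG hko hk7 hf j w i hi4 hik, Finset.mem_singleton]
  constructor
  · rintro ⟨h1, h2, h3⟩
    rcases (hS _).mp h1 with h | h
    · rw [hc1] at h
      linear_combination h
    · exfalso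
      rw [hc1] at h
      apply h2 (i - 3) (by omega)
      refine (hS _).mpr (Or.inl ?_)
      rw [hc3]
      linear_combination h
  · rintro rfl
    refine ⟨?_, ?_, ?_⟩
    · refine (hS _).mpr (Or.inl ?_)
      rw [hc1]
      ring
    · intro a' ha' hadj
      rcases (hS _).mp hadj with h | h
      · have hcast : ((a' : ℕ) : ZMod k) = ((i - 1 : ℕ) : ZMod k) := by
          rw [hc1]
          linear_combination h
        have := cast_inj_lt (show a' < k by omega) (show i - 1 < k by omega) hcast
        omega
      · have hcast : ((a' : ℕ) : ZMod k) = ((i + 1 : ℕ) : ZMod k) := by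
          push_cast
          linear_combination h
        have := cast_inj_lt (show a' < k by omega) (show i + 1 < k by omega) hcast
        omega
    · intro a' ha' heqw
      rcases good_vertex_cases hG hko hk7 hf hS with hr | hr
      · exact hr ⟨_, heqw.symm⟩
      · rw [hr] at heqw
        have h := hf.1 heqw
        have hcast : ((a' : ℕ) : ZMod k) = ((i : ℕ) : ZMod k) := by
          linear_combination -h
        have := cast_inj_lt (show a' < k by omega) (show i < k by omega) hcast
        omega

lemma Jset_cycle_good [NeZero k] {w : V} {a : ZMod k}
    (hS : ∀ i : ZMod k, G.Adj w (f i) ↔ (i = a - 1 ∨ i = a + 1)) :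
    Jset G k f w (k - 1) = {a + 1} := by
  have hc2 : ((k - 2 : ℕ) : ZMod k) = -(2 : ZMod k) := by
    have := castsub hk7 (show 2 ≤ k by omega)
    rw [this]
    push_cast
    ring
  have hc1' : ((k - 1 : ℕ) : ZMod k) = -(1 : ZMod k) := by
    have := castsub hk7 (show 1 ≤ k by omega)
    rw [this]
    push_cast
    ring
  ext j
  rw [mem_Jset, mem_Aset_cycle hG hko hk7 hf, Finset.mem_singleton]
  constructor
  · rintro ⟨h1, h2, h3, h4⟩
    rcases (hS _).mp h1 with h | h
    · exfalso
      rcases (hS _).mp h2 with h' | h'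
      · rw [hc2] at h'
        exact lit_nz hk7 (by omega : 0 < 2) (by omega)
          (by push_cast; linear_combination h - h')
      · rw [hc2] at h'
        exact lit_nz hk7 (by omega : 0 < 4) (by omega)
          (by push_cast; linear_combination h - h')
    · exact h
  · rintro rfl
    refine ⟨(hS _).mpr (Or.inr rfl), ?_, ?_, ?_⟩
    · refine (hS _).mpr (Or.inl ?_)
      rw [hc2]
      ring
    · intro a' h1a h3a hadj
      rcases (hS _).mp hadj with h | h
      · have hcast : ((a' : ℕ) : ZMod k) = ((k - 2 : ℕ) : ZMod k) := by
          rw [hc2]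
          linear_combination h
        have := cast_inj_lt (show a' < k by omega) (show k - 2 < k by omega) hcast
        omega
      · have hcast : ((a' : ℕ) : ZMod k) = ((0 : ℕ) : ZMod k) := by
          push_cast
          linear_combination h
        have := cast_inj_lt (show a' < k by omega) (show 0 < k by omega) hcast
        omega
    · intro a' ha' heqw
      rcases good_vertex_cases hG hko hk7 hf hS with hr | hr
      · exact hr ⟨_, heqw.symm⟩
      · rw [hr] at heqw
        have h := hf.1 heqw
        have hcast : ((a' : ℕ) : ZMod k) = ((k - 1 : ℕ) : ZMod k) := by
          rw [hc1']
          linear_combination -h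
        have := cast_inj_lt (show a' < k by omega) (show k - 1 < k by omega) hcast
        omega

end Count3

section Final
open Finset

variable {V : Type*} {k : ℕ} {G : SimpleGraph V} {f : ZMod k → V}

lemma sum_range_zmod [NeZero k] (hk7 : 7 ≤ k) (h : ZMod k → ℝ) :
    ∑ j ∈ Finset.range k, h (j : ZMod k) = ∑ j : ZMod k, h j := by
  have himg : (Finset.range k).image (fun j : ℕ => (j : ZMod k)) = Finset.univ := by
    apply Finset.eq_univ_of_card
    rw [Finset.card_image_of_injOn, Finset.card_range]
    · exact (ZMod.card k).symm
    · intro x hx y hy hxy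
      exact cast_inj_lt (Finset.mem_range.mp hx) (Finset.mem_range.mp hy) hxy
  rw [← himg, Finset.sum_image]
  intro x hx y hy hxy
  exact cast_inj_lt (Finset.mem_range.mp hx) (Finset.mem_range.mp hy) hxy

open scoped Classical in
lemma nat_card_as_sum [Fintype V] (s : Set V) :
    ((Nat.card ↥s : ℕ) : ℝ) = ∑ w : V, (if w ∈ s then (1:ℝ) else 0) := by
  classical
  rw [Finset.sum_boole]
  congr 1
  rw [Nat.card_coe_set_eq, Set.ncard_eq_toFinset_card' s]
  congr 1
  ext w
  simp

open scoped Classical in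
lemma sum_ite_Jset [NeZero k] (w : V) (i : ℕ) :
    ∑ j : ZMod k, (if w ∈ Aset G k (goodRot f j) i then (1:ℝ) else 0)
      = ((Jset G k f w i).card : ℝ) := by
  classical
  have hs : Finset.univ.filter (fun j : ZMod k => w ∈ Aset G k (goodRot f j) i)
      = Jset G k f w i := by
    ext j
    simp [Finset.mem_filter, mem_Jset]
  rw [Finset.sum_boole, hs]

lemma Icc_decomp (hk7 : 7 ≤ k) :
    Finset.Icc 2 (k-1) = insert 2 (insert 3 (insert (k-1) (Finset.Icc 4 (k-2)))) := by
  ext x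
  simp only [Finset.mem_Icc, Finset.mem_insert]
  omega

variable (hG : NoShortOddCycle G k) (hko : Odd k) (hk7 : 7 ≤ k) (hf : IsCycleMap G f)
include hG hko hk7 hf

open scoped Classical in
lemma contrib_sum_eq [NeZero k] (w : V) :
    ∑ j ∈ Finset.range k, ((if w ∈ Aset G k (goodRot f (j : ZMod k)) 1 then (1:ℝ) else 0) / 2 +
      ∑ i ∈ Finset.Icc 2 (k-1), (if w ∈ Aset G k (goodRot f (j : ZMod k)) i then (1:ℝ) else 0))
    = ((Jset G k f w 1).card : ℝ)/2 +
        ∑ i ∈ Finset.Icc 2 (k-1), ((Jset G k f w i).card : ℝ) := by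
  rw [sum_range_zmod hk7 (fun x => (if w ∈ Aset G k (goodRot f x) 1 then (1:ℝ) else 0) / 2 +
      ∑ i ∈ Finset.Icc 2 (k-1), (if w ∈ Aset G k (goodRot f x) i then (1:ℝ) else 0))]
  rw [Finset.sum_add_distrib]
  congr 1
  · rw [← Finset.sum_div, sum_ite_Jset w 1]
  · rw [Finset.sum_comm]
    exact Finset.sum_congr rfl (fun i _ => sum_ite_Jset w i)

lemma good_contrib [NeZero k] {w : V} {a : ZMod k}
    (hS : ∀ i : ZMod k, G.Adj w (f i) ↔ (i = a - 1 ∨ i = a + 1)) :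
    ((Jset G k f w 1).card : ℝ)/2 +
      ∑ i ∈ Finset.Icc 2 (k-1), ((Jset G k f w i).card : ℝ) = (k:ℝ) - 1 := by
  rw [Jset_one_good hG hko hk7 hf hS]
  rw [Icc_decomp hk7]
  rw [Finset.sum_insert (by simp only [Finset.mem_insert, Finset.mem_Icc]; omega),
    Finset.sum_insert (by simp only [Finset.mem_insert, Finset.mem_Icc]; omega),
    Finset.sum_insert (by simp only [Finset.mem_Icc]; omega)]
  rw [Jset_two_good hG hko hk7 hf hS, Jset_three_good hG hko hk7 hf hS,
    Jset_cycle_good hG hko hk7 hf hS]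
  have hpath : ∑ i ∈ Finset.Icc 4 (k-2), ((Jset G k f w i).card : ℝ) = (k:ℝ) - 5 := by
    rw [Finset.sum_congr rfl (fun i hi => by
      rw [Jset_path_good hG hko hk7 hf (Finset.mem_Icc.mp hi).1 (Finset.mem_Icc.mp hi).2 hS,
        Finset.card_singleton])]
    rw [Finset.sum_const, Nat.card_Icc]
    have h5 : k - 2 + 1 - 4 = k - 5 := by omega
    rw [h5]
    simp only [nsmul_eq_mul, mul_one]
    push_cast [Nat.cast_sub (show 5 ≤ k by omega)]
    ring
  rw [hpath]
  simp only [Finset.card_singleton]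
  have hk' : (7:ℝ) ≤ (k:ℝ) := by exact_mod_cast hk7
  norm_num
  ring

lemma bad_contrib [NeZero k] {w : V}
    (hSbad : ∀ b c : ZMod k, G.Adj w (f b) → G.Adj w (f c) → b = c) :
    ((Jset G k f w 1).card : ℝ)/2 +
      ∑ i ∈ Finset.Icc 2 (k-1), ((Jset G k f w i).card : ℝ) ≤ (k:ℝ) - 3/2 := by
  have h1 : ((Jset G k f w 1).card : ℝ) ≤ 1 := by
    exact_mod_cast Jset_one_bad hG hko hk7 hf hSbad
  have h2 : ((Jset G k f w 2).card : ℝ) ≤ 3 := by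
    exact_mod_cast Jset_two_le hG hko hk7 hf w
  have h3 : ((Jset G k f w 3).card : ℝ) = 0 := by
    rw [Jset_three_bad hG hko hk7 hf hSbad]
    simp
  have hc : ((Jset G k f w (k-1)).card : ℝ) = 0 := by
    rw [Jset_cycle_bad hG hko hk7 hf hSbad]
    simp
  have hpath : ∑ i ∈ Finset.Icc 4 (k-2), ((Jset G k f w i).card : ℝ) ≤ (k:ℝ) - 5 := by
    calc ∑ i ∈ Finset.Icc 4 (k-2), ((Jset G k f w i).card : ℝ)
        ≤ ∑ i ∈ Finset.Icc 4 (k-2), (1:ℝ) := by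
          apply Finset.sum_le_sum
          intro i hi
          exact_mod_cast Jset_path_bad hG hko hk7 hf (Finset.mem_Icc.mp hi).1
            (Finset.mem_Icc.mp hi).2 hSbad
      _ = (k:ℝ) - 5 := by
          rw [Finset.sum_const, Nat.card_Icc]
          have h5 : k - 2 + 1 - 4 = k - 5 := by omega
          rw [h5]
          simp only [nsmul_eq_mul, mul_one]
          push_cast [Nat.cast_sub (show 5 ≤ k by omega)]
          ring
  rw [Icc_decomp hk7]
  rw [Finset.sum_insert (by simp only [Finset.mem_insert, Finset.mem_Icc]; omega),
    Finset.sum_insert (by simp only [Finset.mem_insert, Finset.mem_Icc]; omega),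
    Finset.sum_insert (by simp only [Finset.mem_Icc]; omega)]
  rw [h3, hc]
  linarith

end Final

/-- For a fixed `k`-cycle `v_0 v_1 … v_{k-1}` with good sequences `D_j` and
`n_{i,j} = |A_i(D_j)|`, equality `∑_{j=0}^{k-1} (n_{1,j}/2 + ∑_{i=2}^{k-1} n_{i,j}) = n(k-1)`
holds iff every vertex of `G` is adjacent to exactly two vertices of the cycle, which are
at distance two along the cycle (i.e. its neighbours on the cycle are `v_{a-1}` and
`v_{a+1}` for some `a`). -/
theorem sum_of_contributions_eq_iff {V : Type*} [Fintype V] (k : ℕ) (hodd : Odd k)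
    (hk : 7 ≤ k) (G : SimpleGraph V) (hG : NoShortOddCycle G k)
    (f : ZMod k → V) (hf : IsCycleMap G f) :
    (∑ j ∈ Finset.range k,
        ((Nat.card ↥(Aset G k (goodRot f (j : ZMod k)) 1) : ℝ) / 2 +
          ∑ i ∈ Finset.Icc 2 (k - 1),
            (Nat.card ↥(Aset G k (goodRot f (j : ZMod k)) i) : ℝ)) =
        (Fintype.card V : ℝ) * ((k : ℝ) - 1)) ↔
      ∀ w : V, ∃ a : ZMod k, ∀ i : ZMod k, G.Adj w (f i) ↔ (i = a - 1 ∨ i = a + 1) := by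
  classical
  haveI : NeZero k := ⟨by omega⟩
  have hLHS : (∑ j ∈ Finset.range k,
        ((Nat.card ↥(Aset G k (goodRot f (j : ZMod k)) 1) : ℝ) / 2 +
          ∑ i ∈ Finset.Icc 2 (k - 1),
            (Nat.card ↥(Aset G k (goodRot f (j : ZMod k)) i) : ℝ)))
      = ∑ w : V, (((Jset G k f w 1).card : ℝ)/2 +
          ∑ i ∈ Finset.Icc 2 (k-1), ((Jset G k f w i).card : ℝ)) := by
    have step1 : ∀ j ∈ Finset.range k,
        ((Nat.card ↥(Aset G k (goodRot f (j : ZMod k)) 1) : ℝ) / 2 +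
          ∑ i ∈ Finset.Icc 2 (k - 1),
            (Nat.card ↥(Aset G k (goodRot f (j : ZMod k)) i) : ℝ))
        = ∑ w : V, ((if w ∈ Aset G k (goodRot f (j : ZMod k)) 1 then (1:ℝ) else 0) / 2 +
            ∑ i ∈ Finset.Icc 2 (k-1),
              (if w ∈ Aset G k (goodRot f (j : ZMod k)) i then (1:ℝ) else 0)) := by
      intro j _
      rw [Finset.sum_add_distrib, ← Finset.sum_div]
      congr 1
      · rw [← nat_card_as_sum]
      · rw [Finset.sum_comm]
        refine Finset.sum_congr rfl (fun i _ => ?_)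
        rw [← nat_card_as_sum]
    rw [Finset.sum_congr rfl step1, Finset.sum_comm]
    exact Finset.sum_congr rfl (fun w _ => contrib_sum_eq hG hodd hk hf w)
  rw [hLHS]
  have hcardV : (Fintype.card V : ℝ) * ((k : ℝ) - 1) = ∑ _w : V, ((k:ℝ) - 1) := by
    rw [Finset.sum_const, Finset.card_univ, nsmul_eq_mul]
  constructor
  · intro hsum
    by_contra hbad
    rw [not_forall] at hbad
    obtain ⟨w0, hw0⟩ := hbad
    have hbadw0 : ∀ b c : ZMod k, G.Adj w0 (f b) → G.Adj w0 (f c) → b = c := by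
      rcases trichotomy hG hodd hk hf w0 with hgood | hb
      · exact absurd hgood hw0
      · exact hb
    have hk' : (7:ℝ) ≤ (k:ℝ) := by exact_mod_cast hk
    have hlt : ∑ w : V, (((Jset G k f w 1).card : ℝ)/2 +
          ∑ i ∈ Finset.Icc 2 (k-1), ((Jset G k f w i).card : ℝ))
        < ∑ _w : V, ((k:ℝ) - 1) := by
      apply Finset.sum_lt_sum
      · intro w _
        rcases trichotomy hG hodd hk hf w with ⟨a, ha⟩ | hb
        · rw [good_contrib hG hodd hk hf ha]
        · have := bad_contrib hG hodd hk hf hb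
          linarith
      · refine ⟨w0, Finset.mem_univ _, ?_⟩
        have := bad_contrib hG hodd hk hf hbadw0
        linarith
    rw [hsum, hcardV] at hlt
    exact lt_irrefl _ hlt
  · intro hR
    rw [hcardV]
    refine Finset.sum_congr rfl (fun w _ => ?_)
    obtain ⟨a, ha⟩ := hR w
    exact good_contrib hG hodd hk hf ha
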